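/- Let X be a compact metric space, f : X → X a homeomorphism, U ⊆ X a closed set with f⁻¹(U) ⊆ int(U), and R = ⋂_{k≥0} f^{-k}(U). Let G ⊆ X be a compact set such that for every x ∈ G there exists k ≥ 0 with f^{-k}(x) ∈ U. Then for every open set V ⊇ R there exists n_0 ∈ ℕ such that f^{-k}(G) ⊆ V for all k ≥ n_0. -/

import Mathlib

open Filter Topology Set

/-- Lemma 3(2): if `U` is a closed trapping region for `f⁻¹`, where `f` is a
homeomorphism of a compact metric space, `R = ⋂_{k≥0} f^{-k}(U)` the
corresponding repelling set, and `G` is a compact set contained in the basin of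
`R`, then for every open `V ⊇ R` all sufficiently high backward iterates of `G`
are contained in `V`. -/
theorem backward_iterates_of_compact_in_basin_eventually_in_nbhd_of_repeller
    {X : Type*} [MetricSpace X] [CompactSpace X] (f : X ≃ₜ X)
    (U : Set X) (hUclosed : IsClosed U) (htrap : ⇑f.symm '' U ⊆ interior U)
    (R : Set X) (hR : R = ⋂ k : ℕ, (⇑f.symm)^[k] '' U)
    (G : Set X) (hGcompact : IsCompact G)
    (hGbasin : ∀ x ∈ G, ∃ k : ℕ, (⇑f.symm)^[k] x ∈ U)
    (V : Set X) (hVopen : IsOpen V) (hRV : R ⊆ V) :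
    ∃ n₀ : ℕ, ∀ k ≥ n₀, (⇑f.symm)^[k] '' G ⊆ V := by
  set g := ⇑f.symm with hgdef
  have hgc : Continuous g := f.symm.continuous
  have hAc : ∀ j : ℕ, IsCompact (g^[j] '' U) := fun j =>
    hUclosed.isCompact.image (hgc.iterate j)
  have hstep : ∀ j : ℕ, g^[j + 1] '' U ⊆ g^[j] '' U := by
    intro j
    rw [Function.iterate_succ, Set.image_comp]
    exact Set.image_mono (htrap.trans interior_subset)
  have hAnti : Antitone fun j : ℕ => g^[j] '' U := antitone_nat_of_succ_le hstep
  -- Step 1: some iterate of U is inside V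
  obtain ⟨m, hm⟩ : ∃ m : ℕ, g^[m] '' U ⊆ V := by
    by_contra h
    push_neg at h
    have hne : ∀ j : ℕ, ((g^[j] '' U) ∩ Vᶜ).Nonempty := fun j =>
      Set.inter_compl_nonempty_iff.2 (h j)
    have hdir : Directed (· ⊇ ·) fun j : ℕ => (g^[j] '' U) ∩ Vᶜ := fun i j =>
      ⟨max i j, Set.inter_subset_inter_left _ (hAnti (le_max_left i j)),
        Set.inter_subset_inter_left _ (hAnti (le_max_right i j))⟩
    obtain ⟨x, hx⟩ := IsCompact.nonempty_iInter_of_directed_nonempty_isCompact_isClosed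
      _ hdir hne (fun j => (hAc j).inter_right hVopen.isClosed_compl)
      (fun j => (hAc j).isClosed.inter hVopen.isClosed_compl)
    simp only [Set.mem_iInter, Set.mem_inter_iff] at hx
    have hxR : x ∈ R := hR ▸ Set.mem_iInter.2 fun j => (hx j).1
    exact (hx 0).2 (hRV hxR)
  -- Step 2: finite subcover giving a uniform entry time into int U
  choose k hk using hGbasin
  have hGcov : G ⊆ ⋃ x : G, g^[k x x.2 + 1] ⁻¹' interior U := by
    intro x hx
    refine Set.mem_iUnion.2 ⟨⟨x, hx⟩, ?_⟩
    have : g^[k x hx + 1] x = g (g^[k x hx] x) := Function.iterate_succ_apply' g _ x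
    simp only [Set.mem_preimage, this]
    exact htrap ⟨_, hk x hx, rfl⟩
  obtain ⟨t, ht⟩ := hGcompact.elim_finite_subcover
    (fun x : G => g^[k x x.2 + 1] ⁻¹' interior U)
    (fun x => isOpen_interior.preimage (hgc.iterate _)) hGcov
  set K : ℕ := t.sup (fun x => k x x.2) with hKdef
  refine ⟨K + 1 + m, fun n hn => ?_⟩
  rintro _ ⟨x, hxG, rfl⟩
  obtain ⟨y, hyt, hy⟩ := Set.mem_iUnion₂.1 (ht hxG)
  set j : ℕ := k y y.2 + 1 with hjdef
  have hjK : j ≤ K + 1 := Nat.succ_le_succ (Finset.le_sup (f := fun x : G => k x x.2) hyt)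
  have hjn : j ≤ n := hjK.trans (le_trans (Nat.le_add_right _ m) hn)
  have hmem : g^[j] x ∈ U := interior_subset hy
  have hcalc : g^[n] x = g^[n - j] (g^[j] x) := by
    conv_lhs => rw [← Nat.sub_add_cancel hjn]
    exact Function.iterate_add_apply g (n - j) j x
  have h1 : g^[n] x ∈ g^[n - j] '' U := hcalc ▸ ⟨_, hmem, rfl⟩
  have hmn : m ≤ n - j := Nat.le_sub_of_add_le (by omega)
  exact hm (hAnti hmn h1)
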